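/- Let n ≥ 1, k ≥ 1 be integers and b, a_1,...,a_k integers with gcd(∑_{i∈I} a_i, n) = 1 for all nonempty proper subsets I of {1,...,k}. For any set S of unordered pairs from {1,...,k}, let N(S) be the number of solutions (x_1,...,x_k) ∈ (Z/nZ)^k of a_1x_1 + ... + a_kx_k ≡ b (mod n) satisfying x_u = x_v for every {u,v} ∈ S. If the graph on vertices {1,...,k} with edge set S has c ≥ 2 connected components, then N(S) = n^{c-1}. -/

import Mathlib

open Finset

/-- Counting solutions of a linear equation with unit coefficients. -/
lemma aux_count_lin {α R : Type*} [Fintype α] [DecidableEq α] [CommRing R] [Fintype R]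
    [DecidableEq R] (u : α → R) (hu : ∀ i, IsUnit (u i)) (b : R) (i0 : α) :
    Nat.card {y : α → R // ∑ i, u i * y i = b} =
      Fintype.card R ^ (Fintype.card α - 1) := by
  classical
  let v := fun i => (hu i).unit
  have hv : ∀ i, (v i : R) = u i := fun i => rfl
  have key : ∀ z : {i : α // i ≠ i0} → R,
      ∀ w : R, ∑ i, u i * (fun i => if h : i = i0 then w else z ⟨i, h⟩) i =
        u i0 * w + ∑ j : {i : α // i ≠ i0}, u j * z j := by
    intro z w
    rw [← Finset.sum_erase_add _ _ (Finset.mem_univ i0)]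
    rw [add_comm]
    congr 1
    · simp
    · rw [Finset.sum_subtype (p := fun i => i ≠ i0) (univ.erase i0)
        (fun x => by simp [Finset.mem_erase])
        (fun i => u i * (if h : i = i0 then w else z ⟨i, h⟩))]
      apply Finset.sum_congr rfl
      intro ⟨i, hi⟩ _
      simp [hi]
  have e : {y : α → R // ∑ i, u i * y i = b} ≃ ({i : α // i ≠ i0} → R) :=
    { toFun := fun y => fun i => y.1 i.1
      invFun := fun z =>
        ⟨fun i => if h : i = i0 then
            (v i0)⁻¹ * (b - ∑ j : {i : α // i ≠ i0}, u j * z j) else z ⟨i, h⟩, by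
          rw [key]
          rw [← hv i0, ← mul_assoc]
          simp⟩
      left_inv := by
        intro ⟨y, hy⟩
        ext i
        simp only
        by_cases h : i = i0
        · rw [dif_pos h, h]
          have hS : ∑ j : {i : α // i ≠ i0}, u j * y j = b - u i0 * y i0 := by
            have hk := key (fun j => y j.1) (y i0)
            have hl : ∑ i, u i * (fun i => if h : i = i0 then y i0 else y i) i
                = ∑ i, u i * y i := by
              apply Finset.sum_congr rfl
              intro j _
              by_cases hj : j = i0 <;> simp [hj]
            rw [eq_sub_iff_add_eq, add_comm, ← hk, hl, hy]
          rw [hS]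
          have : b - (b - u i0 * y i0) = u i0 * y i0 := by ring
          rw [this, ← hv i0, ← mul_assoc]
          simp
        · rw [dif_neg h]
      right_inv := by
        intro z
        ext ⟨i, hi⟩
        simp [hi] }
  rw [Nat.card_congr e, Nat.card_eq_fintype_card, Fintype.card_fun]
  congr 1
  rw [Fintype.card_subtype_compl, Fintype.card_subtype_eq]

theorem stmt_11 (k n : ℕ) (hn : 1 ≤ n) (hk : 1 ≤ k) (a : Fin k → ℤ) (b : ℤ)
    (hI : ∀ I : Finset (Fin k), I.Nonempty → I ≠ Finset.univ →
      Int.gcd (∑ i ∈ I, a i) n = 1)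
    (G : SimpleGraph (Fin k)) (c : ℕ) (hc : Nat.card G.ConnectedComponent = c)
    (hc2 : 2 ≤ c) :
    Nat.card {x : Fin k → ZMod n //
        ∑ i, (a i : ZMod n) * x i = (b : ZMod n) ∧
          ∀ u v : Fin k, G.Adj u v → x u = x v} = n ^ (c - 1) := by
  classical
  haveI : NeZero n := ⟨by omega⟩
  haveI : Finite G.ConnectedComponent := Quot.finite _
  haveI F : Fintype G.ConnectedComponent := Fintype.ofFinite _
  let mk : Fin k → G.ConnectedComponent := G.connectedComponentMk
  have hout : ∀ C : G.ConnectedComponent, mk C.out = C := fun C => Quot.out_eq C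
  -- constancy on components
  have hconst : ∀ x : Fin k → ZMod n, (∀ u v : Fin k, G.Adj u v → x u = x v) →
      ∀ i j : Fin k, mk i = mk j → x i = x j := by
    intro x hx i j hij
    have hr : G.Reachable i j := (SimpleGraph.ConnectedComponent.eq).mp hij
    obtain ⟨p⟩ := hr
    induction p with
    | nil => rfl
    | cons h p ih => exact (hx _ _ h).trans (ih (SimpleGraph.ConnectedComponent.eq.mpr ⟨p⟩))
  -- coefficients
  let A : G.ConnectedComponent → ZMod n :=
    fun C => ∑ i ∈ univ.filter (fun i => mk i = C), (a i : ZMod n)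
  have hcardQ : Fintype.card G.ConnectedComponent = c := by
    rw [← hc, Nat.card_eq_fintype_card]
  have hAunit : ∀ C, IsUnit (A C) := by
    intro C
    set I : Finset (Fin k) := univ.filter (fun i => mk i = C) with hIdef
    have hne : I.Nonempty := ⟨C.out, by simp [hIdef, hout C]⟩
    have hproper : I ≠ univ := by
      obtain ⟨C', hC'⟩ := Fintype.exists_ne_of_one_lt_card
        (by omega : 1 < Fintype.card G.ConnectedComponent) C
      intro h
      apply hC'
      have : C'.out ∈ I := h ▸ Finset.mem_univ _
      rw [hIdef, Finset.mem_filter] at this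
      rw [← hout C']
      exact this.2
    have hg := hI I hne hproper
    have hcop : IsCoprime (∑ i ∈ I, a i) (n : ℤ) := Int.isCoprime_iff_gcd_eq_one.mpr hg
    obtain ⟨u, v, huv⟩ := hcop
    have key : (u : ZMod n) * ((∑ i ∈ I, a i : ℤ) : ZMod n) = 1 := by
      have := congrArg (Int.cast : ℤ → ZMod n) huv
      push_cast at this
      simpa [ZMod.natCast_self] using this
    have hA : A C = ((∑ i ∈ I, a i : ℤ) : ZMod n) := by
      simp [A, hIdef, Int.cast_sum]
    exact IsUnit.of_mul_eq_one _ (by rw [hA, mul_comm]; exact key)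
  -- equiv to component functions
  let e1 : {x : Fin k → ZMod n //
        ∑ i, (a i : ZMod n) * x i = (b : ZMod n) ∧
          ∀ u v : Fin k, G.Adj u v → x u = x v} ≃
      {y : G.ConnectedComponent → ZMod n // ∑ C, A C * y C = (b : ZMod n)} :=
    { toFun := fun x => ⟨fun C => x.1 C.out, by
        obtain ⟨x, hx1, hx2⟩ := x
        simp only
        have hxy : ∀ i, x i = x (mk i).out := by
          intro i
          exact hconst x hx2 i (mk i).out (by rw [hout])
        rw [← hx1]
        rw [← Finset.sum_fiberwise univ mk (fun i => (a i : ZMod n) * x i)]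
        apply Finset.sum_congr rfl
        intro C _
        rw [Finset.sum_mul]
        apply Finset.sum_congr rfl
        intro i hi
        rw [Finset.mem_filter] at hi
        rw [hxy i, hi.2]⟩
      invFun := fun y => ⟨fun i => y.1 (mk i), by
        constructor
        · obtain ⟨y, hy⟩ := y
          simp only
          rw [← hy, ← Finset.sum_fiberwise univ mk (fun i => (a i : ZMod n) * y (mk i))]
          apply Finset.sum_congr rfl
          intro C _
          rw [Finset.sum_mul]
          apply Finset.sum_congr rfl
          intro i hi
          rw [Finset.mem_filter] at hi
          rw [hi.2]
        · intro u v huv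
          show y.1 (mk u) = y.1 (mk v)
          exact congrArg y.1 (SimpleGraph.ConnectedComponent.connectedComponentMk_eq_of_adj huv)⟩
      left_inv := by
        intro ⟨x, hx1, hx2⟩
        apply Subtype.ext
        funext i
        show x (mk i).out = x i
        exact hconst x hx2 (mk i).out i (by rw [hout])
      right_inv := by
        intro ⟨y, hy⟩
        ext C
        show y (mk C.out) = y C
        rw [hout] }
  rw [Nat.card_congr e1]
  have hC0 : Nonempty G.ConnectedComponent := by
    have : 0 < Fintype.card G.ConnectedComponent := by omega
    exact Fintype.card_pos_iff.mp this
  obtain ⟨C0⟩ := hC0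
  rw [aux_count_lin A hAunit _ C0, ZMod.card, hcardQ]
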